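/- Let F ⊂ ℝ^n be bounded with finite positive measure and suppose F is lower regular: there exist m > 0 and r_0 > 0 with ℒ^n(F ∩ B̄(x,r)) ≥ m r^n for all x ∈ F and 0 < r < r_0. Then there exist θ = θ(m,n) > 0 and d_0 (depending only on r_0 and n) such that for all d ≥ d_0, ℒ^n(C_d^F) ≤ (1/θ) ℒ^n(F). -/

import Mathlib

open MeasureTheory Metric Set

noncomputable def dyadicCube (n d : ℕ) (m : Fin n → ℤ) : Set (EuclideanSpace ℝ (Fin n)) :=
  {x | ∀ j, (m j : ℝ) * (2 : ℝ) ^ (-(d : ℤ)) ≤ x j ∧ x j ≤ ((m j : ℝ) + 1) * (2 : ℝ) ^ (-(d : ℤ))}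

noncomputable def cubicalCover (n d : ℕ) (E : Set (EuclideanSpace ℝ (Fin n))) :
    Set (EuclideanSpace ℝ (Fin n)) :=
  ⋃ m ∈ {m : Fin n → ℤ | (dyadicCube n d m ∩ E).Nonempty}, dyadicCube n d m

/-- half-open dyadic cube -/
def dyH (n d : ℕ) (k : Fin n → ℤ) : Set (EuclideanSpace ℝ (Fin n)) :=
  {x | ∀ j, (k j : ℝ) * (2 : ℝ) ^ (-(d : ℤ)) ≤ x j ∧ x j < ((k j : ℝ) + 1) * (2 : ℝ) ^ (-(d : ℤ))}

lemma coord_measurable {n : ℕ} (j : Fin n) :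
    Measurable (fun x : EuclideanSpace ℝ (Fin n) => x j) :=
  (measurable_pi_apply j).comp (MeasurableEquiv.toLp 2 (Fin n → ℝ)).symm.measurable

lemma dyH_measurable {n d : ℕ} (k : Fin n → ℤ) : MeasurableSet (dyH n d k) := by
  have : dyH n d k = ⋂ j, ((fun x : EuclideanSpace ℝ (Fin n) => x j) ⁻¹'
      (Ico ((k j : ℝ) * (2 : ℝ) ^ (-(d : ℤ))) (((k j : ℝ) + 1) * (2 : ℝ) ^ (-(d : ℤ))))) := by
    ext x; simp [dyH, Set.mem_iInter, Set.mem_Ico]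
  rw [this]
  exact MeasurableSet.iInter fun j => (coord_measurable j) measurableSet_Ico

lemma dyH_disjoint {n d : ℕ} : Pairwise (Function.onFun Disjoint (dyH n d)) := by
  intro k k' hkk'
  rw [Function.onFun, Set.disjoint_left]
  intro x hx hx'
  apply hkk'
  funext j
  have hr : (0:ℝ) < (2 : ℝ) ^ (-(d : ℤ)) := by positivity
  have h1 := hx j
  have h2 := hx' j
  have e1 : k j = ⌊x j / (2 : ℝ) ^ (-(d : ℤ))⌋ := by
    symm; rw [Int.floor_eq_iff]
    constructor
    · rw [le_div_iff₀ hr]; exact h1.1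
    · rw [div_lt_iff₀ hr]; exact h1.2
  have e2 : k' j = ⌊x j / (2 : ℝ) ^ (-(d : ℤ))⌋ := by
    symm; rw [Int.floor_eq_iff]
    constructor
    · rw [le_div_iff₀ hr]; exact h2.1
    · rw [div_lt_iff₀ hr]; exact h2.2
  rw [e1, e2]

lemma mem_dyH_floor {n d : ℕ} (y : EuclideanSpace ℝ (Fin n)) :
    y ∈ dyH n d (fun j => ⌊y j / (2 : ℝ) ^ (-(d : ℤ))⌋) := by
  intro j
  have hr : (0:ℝ) < (2 : ℝ) ^ (-(d : ℤ)) := by positivity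
  constructor
  · rw [← le_div_iff₀ hr]; exact Int.floor_le _
  · rw [← div_lt_iff₀ hr]; push_cast; exact Int.lt_floor_add_one _

lemma coord_dist_le {n : ℕ} (x y : EuclideanSpace ℝ (Fin n)) (j : Fin n) :
    dist (x j) (y j) ≤ dist x y := by
  rw [EuclideanSpace.dist_eq]
  have h : dist (x j) (y j) ^ 2 ≤ ∑ i, dist (x i) (y i) ^ 2 :=
    Finset.single_le_sum (f := fun i => dist (x i) (y i) ^ 2)
      (fun i _ => sq_nonneg _) (Finset.mem_univ j)
  calc dist (x j) (y j) = Real.sqrt (dist (x j) (y j) ^ 2) := (Real.sqrt_sq dist_nonneg).symm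
  _ ≤ _ := Real.sqrt_le_sqrt h

lemma volume_dyadicCube {n d : ℕ} (k : Fin n → ℤ) :
    volume (dyadicCube n d k) = ENNReal.ofReal ((2 : ℝ) ^ (-(d : ℤ))) ^ n := by
  have h : dyadicCube n d k = (MeasurableEquiv.toLp 2 (Fin n → ℝ)).symm ⁻¹'
      (Set.pi Set.univ fun j => Icc ((k j : ℝ) * (2 : ℝ) ^ (-(d : ℤ)))
        (((k j : ℝ) + 1) * (2 : ℝ) ^ (-(d : ℤ)))) := by
    ext x
    simp only [dyadicCube, Set.mem_setOf_eq, Set.mem_preimage, Set.mem_pi, Set.mem_univ,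
      true_implies, Set.mem_Icc]
    exact Iff.rfl
  rw [h, (EuclideanSpace.volume_preserving_symm_measurableEquiv_toLp (Fin n)).measure_preimage
    ((MeasurableSet.univ_pi fun j => measurableSet_Icc).nullMeasurableSet)]
  rw [volume_pi_pi]
  have : ∀ j : Fin n, volume (Icc ((k j : ℝ) * (2 : ℝ) ^ (-(d : ℤ)))
      (((k j : ℝ) + 1) * (2 : ℝ) ^ (-(d : ℤ)))) = ENNReal.ofReal ((2 : ℝ) ^ (-(d : ℤ))) := by
    intro j
    rw [Real.volume_Icc]
    congr 1
    ring
  simp only [this]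
  simp [Finset.prod_const]

theorem stmt_6 (n : ℕ) (m r₀ : ℝ) (hm : 0 < m) (hr₀ : 0 < r₀) :
    ∃ θ : ℝ, 0 < θ ∧ ∃ d₀ : ℕ,
      ∀ (F : Set (EuclideanSpace ℝ (Fin n))), Bornology.IsBounded F →
        0 < volume F → volume F < ⊤ →
        (∀ x ∈ F, ∀ r : ℝ, 0 < r → r < r₀ →
          ENNReal.ofReal (m * r ^ n) ≤ volume (F ∩ Metric.closedBall x r)) →
        ∀ d : ℕ, d₀ ≤ d →
          volume (cubicalCover n d F) ≤ ENNReal.ofReal (1 / θ) * volume F := by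
  refine ⟨m / 6 ^ n, by positivity, ?_⟩
  obtain ⟨d₀, hd₀⟩ : ∃ d₀ : ℕ, (2 : ℝ) ^ (-(d₀ : ℤ)) < r₀ := by
    obtain ⟨N, hN⟩ := exists_pow_lt_of_lt_one hr₀ (by norm_num : (1:ℝ)/2 < 1)
    refine ⟨N, ?_⟩
    calc (2 : ℝ) ^ (-(N : ℤ)) = ((2:ℝ) ^ (N:ℤ))⁻¹ := by rw [zpow_neg]
    _ = ((2:ℝ) ^ N)⁻¹ := by rw [zpow_natCast]
    _ = ((1:ℝ)/2) ^ N := by rw [one_div, inv_pow]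
    _ < r₀ := hN
  refine ⟨d₀, ?_⟩
  intro F hFb hF0 hFtop hreg d hd
  set r : ℝ := (2 : ℝ) ^ (-(d : ℤ)) with hrdef
  have hrpos : 0 < r := by positivity
  have hrle : r ≤ (2 : ℝ) ^ (-(d₀ : ℤ)) := by
    rw [hrdef]
    exact zpow_le_zpow_right₀ one_le_two (by omega)
  have hrlt : r < r₀ := lt_of_le_of_lt hrle hd₀
  set ρ : ℝ := r / 2 with hρdef
  have hρpos : 0 < ρ := by positivity
  have hρlt : ρ < r₀ := lt_trans (by linarith) hrlt
  set S : Set (Fin n → ℤ) := {k | (dyadicCube n d k ∩ F).Nonempty} with hSdef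
  have hScount : S.Countable := S.to_countable
  -- choose center points
  have hchoice : ∀ k : S, ∃ x, x ∈ dyadicCube n d ↑k ∩ F := fun k => k.2
  choose x hx using hchoice
  have hm0 : (ENNReal.ofReal m) ≠ 0 := by
    simp [ENNReal.ofReal_eq_zero, not_le, hm]
  have hmtop : (ENNReal.ofReal m) ≠ ⊤ := ENNReal.ofReal_ne_top
  set A : ENNReal := ENNReal.ofReal ((2:ℝ) ^ n) * (ENNReal.ofReal m)⁻¹ with hA
  set E : Finset (Fin n → ℤ) := Fintype.piFinset (fun _ : Fin n => Finset.Icc (-1 : ℤ) 1)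
    with hE
  -- per-cube bound
  have key : ∀ k : S, volume (dyadicCube n d ↑k) ≤
      A * volume (F ∩ closedBall (x k) ρ) := by
    intro k
    have hxF : x k ∈ F := (hx k).2
    have hreg' := hreg (x k) hxF ρ hρpos hρlt
    have hr2ρ : r = 2 * ρ := by rw [hρdef]; ring
    have h1 : volume (dyadicCube n d ↑k) = ENNReal.ofReal ((2:ℝ)^n) * ENNReal.ofReal (ρ ^ n) := by
      rw [volume_dyadicCube, ← ENNReal.ofReal_pow hrpos.le, ← ENNReal.ofReal_mul (by positivity)]
      congr 1
      rw [hr2ρ, mul_pow]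
    have h2 : ENNReal.ofReal (ρ ^ n) ≤ (ENNReal.ofReal m)⁻¹ * volume (F ∩ closedBall (x k) ρ) := by
      have : ENNReal.ofReal (ρ ^ n) =
          (ENNReal.ofReal m)⁻¹ * (ENNReal.ofReal m * ENNReal.ofReal (ρ ^ n)) := by
        rw [← mul_assoc, ENNReal.inv_mul_cancel hm0 hmtop, one_mul]
      rw [this, ← ENNReal.ofReal_mul hm.le]
      exact mul_le_mul_right hreg' _
    calc volume (dyadicCube n d ↑k)
        = ENNReal.ofReal ((2:ℝ)^n) * ENNReal.ofReal (ρ ^ n) := h1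
      _ ≤ ENNReal.ofReal ((2:ℝ)^n) * ((ENNReal.ofReal m)⁻¹ * volume (F ∩ closedBall (x k) ρ)) :=
          mul_le_mul_right h2 _
      _ = A * volume (F ∩ closedBall (x k) ρ) := by rw [hA, mul_assoc]
  -- covering of balls by half-open cubes
  have cover_ball : ∀ k : S, F ∩ closedBall (x k) ρ ⊆
      ⋃ ε ∈ E, (F ∩ dyH n d (↑k + ε)) := by
    intro k y hy
    have hyx : ∀ j, dist (y j) (x k j) ≤ ρ := fun j =>
      le_trans (coord_dist_le y (x k) j) (mem_closedBall.mp hy.2)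
    set κ : Fin n → ℤ := fun j => ⌊y j / r⌋ with hκ
    have hyκ : y ∈ dyH n d κ := mem_dyH_floor y
    have hκb : ∀ j, κ j - (↑k : Fin n → ℤ) j ∈ Finset.Icc (-1 : ℤ) 1 := by
      intro j
      have hxk := (hx k).1 j
      have hd1 : |y j - x k j| ≤ r / 2 := by
        have := hyx j
        rw [Real.dist_eq] at this
        exact le_trans this (le_of_eq hρdef)
      obtain ⟨ha, hb⟩ := abs_le.mp hd1
      have hxl := hxk.1
      have hxh := hxk.2
      rw [← hrdef] at hxl hxh
      have hlow : ((↑k : Fin n → ℤ) j : ℝ) - 1 ≤ y j / r := by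
        rw [le_div_iff₀ hrpos]
        linarith
      have hhigh : y j / r < ((↑k : Fin n → ℤ) j : ℝ) + 2 := by
        rw [div_lt_iff₀ hrpos]
        linarith
      have h1 : (↑k : Fin n → ℤ) j - 1 ≤ κ j := by
        rw [hκ]
        apply Int.le_floor.mpr
        push_cast
        exact hlow
      have h2 : κ j < (↑k : Fin n → ℤ) j + 2 := by
        rw [hκ]
        apply Int.floor_lt.mpr
        push_cast
        exact hhigh
      rw [Finset.mem_Icc]
      omega
    refine Set.mem_biUnion (Fintype.mem_piFinset.mpr fun j => hκb j) ?_
    have : (↑k + fun j => κ j - (↑k : Fin n → ℤ) j) = κ := by funext j; simp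
    rw [this]
    exact ⟨hy.1, hyκ⟩
  -- tiling bound
  have tile : ∀ ε : Fin n → ℤ, (∑' k : S, volume (F ∩ dyH n d (↑k + ε))) ≤ volume F := by
    intro ε
    have hinj : Function.Injective (fun k : S => (↑k : Fin n → ℤ) + ε) := by
      intro a b hab
      exact Subtype.ext (by simpa using hab)
    calc (∑' k : S, volume (F ∩ dyH n d (↑k + ε)))
        ≤ ∑' k' : Fin n → ℤ, volume (F ∩ dyH n d k') :=
          ENNReal.summable.tsum_le_tsum_of_inj _ hinj (fun _ _ => by simp) (fun _ => le_rfl)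
            ENNReal.summable
      _ = ∑' k' : Fin n → ℤ, (volume.restrict F) (dyH n d k') := by
          congr 1; funext k'
          rw [Measure.restrict_apply (dyH_measurable k'), Set.inter_comm]
      _ = (volume.restrict F) (⋃ k', dyH n d k') :=
          (measure_iUnion dyH_disjoint (fun k' => dyH_measurable k')).symm
      _ ≤ (volume.restrict F) Set.univ := measure_mono (Set.subset_univ _)
      _ = volume F := by rw [Measure.restrict_apply_univ]
  -- card of E
  have hEcard : (E.card : ENNReal) = (3:ENNReal) ^ n := by
    rw [hE, Fintype.card_piFinset]
    simp [Int.card_Icc]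
  -- main chain
  calc volume (cubicalCover n d F)
      ≤ ∑' k : S, volume (dyadicCube n d ↑k) := measure_biUnion_le volume hScount _
    _ ≤ ∑' k : S, A * volume (F ∩ closedBall (x k) ρ) := ENNReal.tsum_le_tsum key
    _ = A * ∑' k : S, volume (F ∩ closedBall (x k) ρ) := ENNReal.tsum_mul_left
    _ ≤ A * ∑' k : S, ∑ ε ∈ E, volume (F ∩ dyH n d (↑k + ε)) := by
        apply mul_le_mul_right
        apply ENNReal.tsum_le_tsum
        intro k
        calc volume (F ∩ closedBall (x k) ρ)
            ≤ volume (⋃ ε ∈ E, (F ∩ dyH n d (↑k + ε))) := measure_mono (cover_ball k)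
          _ ≤ ∑ ε ∈ E, volume (F ∩ dyH n d (↑k + ε)) := measure_biUnion_finset_le E _
    _ = A * ∑ ε ∈ E, ∑' k : S, volume (F ∩ dyH n d (↑k + ε)) := by
        rw [Summable.tsum_finsetSum (fun _ _ => ENNReal.summable)]
    _ ≤ A * ∑ ε ∈ E, volume F := by
        apply mul_le_mul_right
        exact Finset.sum_le_sum fun ε _ => tile ε
    _ = A * ((3:ENNReal)^n * volume F) := by
        rw [Finset.sum_const, nsmul_eq_mul, hEcard]
    _ = ENNReal.ofReal (1 / (m / 6 ^ n)) * volume F := by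
        rw [← mul_assoc]
        congr 1
        rw [one_div, inv_div, div_eq_mul_inv, ENNReal.ofReal_mul (by positivity),
          ENNReal.ofReal_inv_of_pos hm, hA]
        have h6 : (6:ℝ)^n = 2^n * 3^n := by rw [← mul_pow]; norm_num
        rw [h6, ENNReal.ofReal_mul (by positivity)]
        have h3 : ENNReal.ofReal ((3:ℝ)^n) = (3:ENNReal)^n := by
          rw [ENNReal.ofReal_pow (by norm_num)]
          norm_num
        rw [h3]
        ring
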